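/- For each i with 0 ≤ i ≤ m+n, the numerator polynomial identity holds: Σ_{i=0}^n ω_i p_i B_i^n(t) − (Σ_{i=0}^n ω_i B_i^n(t))(Σ_{j=0}^m q_j B_j^m(t)) = Σ_{i=0}^{m+n} [ Σ_{j=max(0,i−m)}^{min(n,i)} (C(n,j)C(m,i−j)/C(m+n,i)) ω_j (p_j − q_{i−j}) ] B_i^{m+n}(t). -/

import Mathlib

open Finset

/-- The Bernstein basis polynomial `B_i^n(t) = C(n,i) t^i (1-t)^(n-i)`. -/
noncomputable def bern (n i : ℕ) (t : ℝ) : ℝ := (n.choose i : ℝ) * t ^ i * (1 - t) ^ (n - i)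

lemma bern_sum (m : ℕ) (t : ℝ) : ∑ j ∈ range (m + 1), bern m j t = 1 := by
  have h := add_pow t (1 - t) m
  rw [show t + (1 - t) = 1 by ring, one_pow] at h
  rw [h]
  exact Finset.sum_congr rfl fun j _ => by simp only [bern]; ring

theorem numerator_identity (d m n : ℕ) (ω : ℕ → ℝ)
    (p q : ℕ → EuclideanSpace ℝ (Fin d)) (t : ℝ) :
    (∑ i ∈ range (n + 1), (ω i * bern n i t) • p i)
      - (∑ i ∈ range (n + 1), ω i * bern n i t) • (∑ j ∈ range (m + 1), bern m j t • q j)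
      = ∑ i ∈ range (m + n + 1), bern (m + n) i t •
          ∑ j ∈ Finset.Icc (i - m) (min n i),
            ((n.choose j : ℝ) * (m.choose (i - j)) / ((m + n).choose i) * ω j)
              • (p j - q (i - j)) := by
  have hsum : ∑ j ∈ range (m + 1), bern m j t = 1 := bern_sum m t
  have key : ∀ k ∈ range (m + n + 1), ∀ j ∈ Finset.Icc (k - m) (min n k),
      bern (m + n) k t * ((n.choose j : ℝ) * (m.choose (k - j)) / ((m + n).choose k) * ω j)
        = ω j * bern n j t * bern m (k - j) t := by
    intro k hk j hj
    simp only [mem_range, mem_Icc, le_min_iff] at hk hj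
    obtain ⟨hjm, hjn, hjk⟩ := hj
    have hkmn : k ≤ m + n := by omega
    have hc : ((m + n).choose k : ℝ) ≠ 0 := by
      exact_mod_cast (Nat.choose_pos hkmn).ne'
    have e1 : t ^ j * t ^ (k - j) = t ^ k := by
      rw [← pow_add]; congr 1; omega
    have e2 : (1 - t) ^ (n - j) * (1 - t) ^ (m - (k - j)) = (1 - t) ^ (m + n - k) := by
      rw [← pow_add]; congr 1; omega
    have hb : bern n j t * bern m (k - j) t
        = ((n.choose j : ℝ) * (m.choose (k - j))) * (t ^ k * (1 - t) ^ (m + n - k)) := by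
      calc bern n j t * bern m (k - j) t
          = ((n.choose j : ℝ) * (m.choose (k - j))) *
              ((t ^ j * t ^ (k - j)) * ((1 - t) ^ (n - j) * (1 - t) ^ (m - (k - j)))) := by
            simp only [bern]; ring
        _ = _ := by rw [e1, e2]
    rw [mul_assoc, hb]
    simp only [bern]
    field_simp
  calc (∑ i ∈ range (n + 1), (ω i * bern n i t) • p i)
      - (∑ i ∈ range (n + 1), ω i * bern n i t) • (∑ j ∈ range (m + 1), bern m j t • q j)
      = ∑ i ∈ range (n + 1), ∑ j ∈ range (m + 1),
          (ω i * bern n i t * bern m j t) • (p i - q j) := by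
        rw [Finset.sum_smul, ← Finset.sum_sub_distrib]
        refine Finset.sum_congr rfl fun i _ => ?_
        rw [Finset.smul_sum]
        have hp : (ω i * bern n i t) • p i
            = ∑ j ∈ range (m + 1), (ω i * bern n i t * bern m j t) • p i := by
          rw [← Finset.sum_smul, ← Finset.mul_sum, hsum, mul_one]
        rw [hp, ← Finset.sum_sub_distrib]
        refine Finset.sum_congr rfl fun j _ => ?_
        rw [smul_smul, ← smul_sub]
    _ = ∑ k ∈ range (m + n + 1), ∑ j ∈ Finset.Icc (k - m) (min n k),
          (ω j * bern n j t * bern m (k - j) t) • (p j - q (k - j)) := by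
        rw [Finset.sum_sigma', Finset.sum_sigma']
        refine Finset.sum_nbij' (i := fun x => ⟨x.1 + x.2, x.1⟩)
          (j := fun x => ⟨x.2, x.1 - x.2⟩) ?_ ?_ ?_ ?_ ?_
        · rintro ⟨a, b⟩ hab
          simp only [mem_sigma, mem_range, mem_Icc, le_min_iff] at hab ⊢
          omega
        · rintro ⟨a, b⟩ hab
          simp only [mem_sigma, mem_range, mem_Icc, le_min_iff] at hab ⊢
          omega
        · rintro ⟨a, b⟩ hab
          simp
        · rintro ⟨a, b⟩ hab
          simp only [mem_sigma, mem_range, mem_Icc, le_min_iff] at hab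
          have : b + (a - b) = a := by omega
          simp [this]
        · rintro ⟨a, b⟩ hab
          simp
    _ = _ := by
        refine Finset.sum_congr rfl fun k hk => ?_
        rw [Finset.smul_sum]
        refine Finset.sum_congr rfl fun j hj => ?_
        rw [smul_smul, key k hk j hj]
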